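/- Let G be a connected finite simple graph and T a spanning tree of G rooted at a vertex r such that every edge of G joins two vertices one of which is an ancestor of the other in T (the defining property of a depth-first search tree). Let F = E(G)\E(T) and let X ⊆ V(G). If C and C' are two distinct cycles in G − X that have at least two vertices in common, then there exist two distinct edges e, e' ∈ F, each active in X, that have a conflict. -/

import Mathlib

open SimpleGraph

/-- `u` is an ancestor of `v` in the tree `T` rooted at `r`. -/
def Anc {V : Type*} (T : SimpleGraph V) (r u v : V) : Prop :=
  ∀ p : T.Walk r v, p.IsPath → u ∈ p.support

/-- `x` lies on the span (tree path) from `t` to `b`. -/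
def InSpan {V : Type*} (T : SimpleGraph V) (t b x : V) : Prop :=
  ∀ p : T.Walk t b, p.IsPath → x ∈ p.support

/-- Two non-tree edges, given by tops/bottoms `(t, b)` and `(t', b')`, have a conflict
    if the top of one belongs to the truncated span of the other. -/
def Conflict {V : Type*} (T : SimpleGraph V) (t b t' b' : V) : Prop :=
  (InSpan T t b t' ∧ t' ≠ b) ∨ (InSpan T t' b' t ∧ t ≠ b')

/-- The edge `e` is active in `X`: some cycle of `G − X` traverses `e`. -/
def ActiveIn {V : Type*} (G : SimpleGraph V) (X : Set V) (e : Sym2 V) : Prop :=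
  ∃ (u : ↥Xᶜ) (c : (G.induce Xᶜ).Walk u u), c.IsCycle ∧
    e ∈ c.edges.map (Sym2.map Subtype.val)

namespace Stmt4Aux

open SimpleGraph.Walk

variable {V : Type*} {T : SimpleGraph V}

/-- the unique path in a tree between two vertices -/
noncomputable def tpath (hT : T.IsTree) (u v : V) : T.Walk u v :=
  (hT.existsUnique_path u v).exists.choose

lemma tpath_isPath (hT : T.IsTree) (u v : V) : (tpath hT u v).IsPath :=
  (hT.existsUnique_path u v).exists.choose_spec

lemma tpath_unique (hT : T.IsTree) {u v : V} (p : T.Walk u v) (hp : p.IsPath) :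
    p = tpath hT u v := by
  obtain ⟨q, hq, huniq⟩ := hT.existsUnique_path u v
  rw [huniq p hp, huniq (tpath hT u v) (tpath_isPath hT u v)]

section TakeUntil

variable {G : SimpleGraph V} [DecidableEq V]

lemma takeUntil_cons' {a c b x : V} (h : G.Adj a c) (p : G.Walk c b)
    (hx : x ∈ (Walk.cons h p).support) (hxa : a ≠ x) (hx' : x ∈ p.support) :
    (Walk.cons h p).takeUntil x hx = Walk.cons h (p.takeUntil x hx') := by
  simp only [Walk.takeUntil, dif_neg hxa]

/-- order of two vertices on a walk -/
lemma mem_takeUntil_or {a b : V} (p : G.Walk a b) :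
    ∀ {x y : V} (hx : x ∈ p.support) (hy : y ∈ p.support),
      x ∈ (p.takeUntil y hy).support ∨ y ∈ (p.takeUntil x hx).support := by
  induction p with
  | nil =>
    intro x y hx hy
    rw [Walk.mem_support_nil_iff] at hx hy
    subst hx; subst hy
    exact Or.inl (Walk.start_mem_support _)
  | @cons a c b h q ih =>
    intro x y hx hy
    by_cases hxa : a = x
    · subst hxa
      exact Or.inl (Walk.start_mem_support _)
    by_cases hya : a = y
    · subst hya
      exact Or.inr (Walk.start_mem_support _)
    have hx' : x ∈ q.support := by
      rcases (by simpa using hx : x = a ∨ x ∈ q.support) with h1 | h1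
      · exact absurd h1.symm hxa
      · exact h1
    have hy' : y ∈ q.support := by
      rcases (by simpa using hy : y = a ∨ y ∈ q.support) with h1 | h1
      · exact absurd h1.symm hya
      · exact h1
    rw [takeUntil_cons' h q hx hxa hx', takeUntil_cons' h q hy hya hy']
    rcases ih hx' hy' with h1 | h1
    · exact Or.inl (by simp [h1])
    · exact Or.inr (by simp [h1])

end TakeUntil


section Anc

variable [DecidableEq V] (hT : T.IsTree) (r : V)

/-- ancestor relation -/
def anc (u v : V) : Prop := u ∈ (tpath hT r v).support

lemma takeUntil_tpath {a b x : V} (h : x ∈ (tpath hT a b).support) :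
    (tpath hT a b).takeUntil x h = tpath hT a x :=
  tpath_unique hT _ ((tpath_isPath hT a b).takeUntil h)

lemma dropUntil_tpath {a b x : V} (h : x ∈ (tpath hT a b).support) :
    (tpath hT a b).dropUntil x h = tpath hT x b :=
  tpath_unique hT _ ((tpath_isPath hT a b).dropUntil h)

lemma anc_refl (u : V) : anc hT r u u := Walk.end_mem_support _

lemma anc_trans {u w v : V} (h1 : anc hT r u w) (h2 : anc hT r w v) :
    anc hT r u v := by
  have := Walk.support_takeUntil_subset (tpath hT r v) h2
  rw [takeUntil_tpath hT h2] at this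
  exact this h1

lemma length_tpath_add {u v : V} (h : anc hT r u v) :
    (tpath hT r v).length = (tpath hT r u).length + (tpath hT u v).length := by
  conv_lhs => rw [← Walk.take_spec (tpath hT r v) h]
  rw [Walk.length_append, takeUntil_tpath hT h, dropUntil_tpath hT h]

lemma anc_antisymm {u v : V} (h1 : anc hT r u v) (h2 : anc hT r v u) : u = v := by
  have e1 := length_tpath_add hT r h1
  have e2 := length_tpath_add hT r h2
  exact Walk.eq_of_length_eq_zero (p := tpath hT u v) (by omega)

lemma anc_length_le {u v : V} (h : anc hT r u v) :
    (tpath hT r u).length ≤ (tpath hT r v).length := by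
  have := length_tpath_add hT r h; omega

lemma anc_eq_of_length {u v : V} (h : anc hT r u v)
    (hl : (tpath hT r u).length = (tpath hT r v).length) : u = v := by
  have := length_tpath_add hT r h
  exact Walk.eq_of_length_eq_zero (p := tpath hT u v) (by omega)

lemma anc_total {u w v : V} (h1 : anc hT r u v) (h2 : anc hT r w v) :
    anc hT r u w ∨ anc hT r w u := by
  rcases mem_takeUntil_or (tpath hT r v) h1 h2 with h | h
  · left; rwa [takeUntil_tpath hT h2] at h
  · right; rwa [takeUntil_tpath hT h1] at h

lemma eq_of_mem_take_drop {a b t x : V} {p : T.Walk a b} (hp : p.IsPath)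
    (ht : t ∈ p.support) (h1 : x ∈ (p.takeUntil t ht).support)
    (h2 : x ∈ (p.dropUntil t ht).support) : x = t := by
  by_contra hne
  have hnodup : p.support.Nodup := hp.support_nodup
  rw [← Walk.take_spec p ht, Walk.support_append] at hnodup
  rcases List.nodup_append.mp hnodup with ⟨_, _, hdisj⟩
  have h2' : x ∈ (p.dropUntil t ht).support.tail := by
    have := Walk.support_eq_cons (p.dropUntil t ht)
    rw [this] at h2
    rcases List.mem_cons.mp h2 with h2 | h2
    · exact absurd h2 hne
    · exact h2
  exact hdisj x h1 x h2' rfl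

/-- membership in a span -/
lemma mem_span_iff {a b x : V} (hab : anc hT r a b) :
    x ∈ (tpath hT a b).support ↔ anc hT r a x ∧ anc hT r x b := by
  constructor
  · intro hx
    have hx' : x ∈ ((tpath hT r b).dropUntil a hab).support := by
      rwa [dropUntil_tpath hT hab]
    have hxb : anc hT r x b := Walk.support_dropUntil_subset _ hab hx'
    refine ⟨?_, hxb⟩
    rcases mem_takeUntil_or (tpath hT r b) hab hxb with h | h
    · rwa [takeUntil_tpath hT hxb] at h
    · have := eq_of_mem_take_drop (tpath_isPath hT r b) hab h hx'
      subst this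
      exact anc_refl hT r x
  · rintro ⟨hax, hxb⟩
    have hx : x ∈ (tpath hT r b).support := hxb
    rw [← Walk.take_spec (tpath hT r b) hab, Walk.mem_support_append_iff] at hx
    rcases hx with hx | hx
    · rw [takeUntil_tpath hT hab] at hx
      have : x = a := anc_antisymm hT r hx hax
      subst this
      exact Walk.start_mem_support _
    · rwa [dropUntil_tpath hT hab] at hx

/-- growing a tree path by a tree edge downward -/
lemma support_tpath_adj {x y : V} (hadj : T.Adj x y) (hxy : anc hT r x y) :
    (tpath hT r y).support = (tpath hT r x).support ++ [y] := by
  have hy : y ∉ (tpath hT r x).support := by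
    intro hmem
    exact hadj.ne (anc_antisymm hT r hxy hmem)
  have hpath : ((tpath hT r x).concat hadj).IsPath := by
    rw [← Walk.isPath_reverse_iff, Walk.reverse_concat]
    exact ((tpath_isPath hT r x).reverse).cons (by rwa [Walk.support_reverse, List.mem_reverse])
  have := tpath_unique hT _ hpath
  rw [← this, Walk.support_concat]

lemma anc_of_anc_adj {x y z : V} (hadj : T.Adj x y) (hxy : anc hT r x y)
    (hz : anc hT r z y) (hzy : z ≠ y) : anc hT r z x := by
  have := support_tpath_adj hT r hadj hxy
  unfold anc at hz ⊢
  rw [this, List.mem_append] at hz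
  rcases hz with hz | hz
  · exact hz
  · simp at hz; exact absurd hz hzy

lemma length_tpath_adj {x y : V} (hadj : T.Adj x y) (hxy : anc hT r x y) :
    (tpath hT r y).length = (tpath hT r x).length + 1 := by
  have h1 := congrArg List.length (support_tpath_adj hT r hadj hxy)
  rw [Walk.length_support, List.length_append, Walk.length_support] at h1
  simpa using h1

lemma parent_unique {x x' y : V} (h1 : T.Adj x y) (h2 : T.Adj x' y)
    (ha1 : anc hT r x y) (ha2 : anc hT r x' y) : x = x' := by
  have e1 := support_tpath_adj hT r h1 ha1
  have e2 := support_tpath_adj hT r h2 ha2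
  have e3 : (tpath hT r x).support = (tpath hT r x').support := by
    have := e1.symm.trans e2
    have := congrArg List.dropLast this
    simpa [List.dropLast_concat] using this
  have l1 := Walk.getLast_support (tpath hT r x)
  have l2 := Walk.getLast_support (tpath hT r x')
  rw [← l1, ← l2]
  congr 1

lemma squeeze_eq {t c x : V} (hadj : T.Adj t c) (htc : anc hT r t c)
    (h1 : anc hT r t x) (h2 : anc hT r x c) : x = t ∨ x = c := by
  have l1 := anc_length_le hT r h1
  have l2 := anc_length_le hT r h2
  have l3 := length_tpath_adj hT r hadj htc
  rcases Nat.lt_or_ge (tpath hT r x).length (tpath hT r c).length with h | h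
  · left
    exact (anc_eq_of_length hT r h1 (by omega)).symm
  · right
    exact anc_eq_of_length hT r h2 (by omega)

end Anc

section Parity

variable {α : Type*} {H : SimpleGraph α} (S : α → Prop) [DecidablePred S]

/-- a dart crossing the cut S -/
def crossb (d : H.Dart) : Bool := decide (S d.fst) != decide (S d.snd)

lemma crossing_parity {a b : α} (w : H.Walk a b) :
    Even (w.darts.countP (crossb S)) ↔ (S a ↔ S b) := by
  induction w with
  | nil => simp
  | @cons a c b h q ih =>
    rw [Walk.darts_cons, List.countP_cons]
    by_cases hac : S a <;> by_cases hcc : S c <;>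
      simp [crossb, hac, hcc, Nat.even_add_one, ih] <;> tauto

/-- a walk from inside S to outside S contains an exiting dart -/
lemma exists_exit_dart {a b : α} (w : H.Walk a b) :
    S a → ¬ S b → ∃ d ∈ w.darts, S d.fst ∧ ¬ S d.snd := by
  induction w with
  | nil => intro ha hb; exact absurd ha hb
  | @cons a c b h q ih =>
    intro ha hb
    by_cases hcc : S c
    · obtain ⟨d, hd, hd2⟩ := ih hcc hb
      exact ⟨d, by simp [Walk.darts_cons, hd], hd2⟩
    · exact ⟨⟨(a, c), h⟩, by simp [Walk.darts_cons], ha, hcc⟩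

end Parity

section CycleDarts

variable {α : Type*} {H : SimpleGraph α}

lemma cycle_tail_ne_nil {w0 : α} {c : H.Walk w0 w0} (hc : c.IsCycle) :
    c.support.tail ≠ [] := by
  have h3 := hc.three_le_length
  have hls := Walk.length_support c
  intro h
  rw [Walk.support_eq_cons c, h] at hls
  have : (1:Nat) = c.length + 1 := by simpa using hls
  omega

lemma cycle_snd_nodup {w0 : α} {c : H.Walk w0 w0} (hc : c.IsCycle) :
    (c.darts.map (fun d => d.snd)).Nodup := by
  rw [Walk.map_snd_darts]
  exact hc.support_nodup

lemma cycle_getLast_tail {w0 : α} {c : H.Walk w0 w0} (hc : c.IsCycle) :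
    c.support.tail.getLast (cycle_tail_ne_nil hc) = w0 := by
  have htne := cycle_tail_ne_nil hc
  have key : ∀ (l : List α) (hl : l ≠ []), l = c.support → l.getLast hl = w0 := by
    intro l hl he
    subst he
    exact Walk.getLast_support c
  have h1 := key (w0 :: c.support.tail) (by simp) (Walk.support_eq_cons c).symm
  rwa [List.getLast_cons htne] at h1

lemma cycle_mem_support_tail {w0 z : α} {c : H.Walk w0 w0} (hc : c.IsCycle)
    (hz : z ∈ c.support) : z ∈ c.support.tail := by
  have h1 : z = w0 ∨ z ∈ c.support.tail := by
    rw [Walk.support_eq_cons c] at hz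
    exact List.mem_cons.mp hz
  rcases h1 with h1 | h1
  · have h2 := List.getLast_mem (cycle_tail_ne_nil hc)
    rw [cycle_getLast_tail hc] at h2
    rw [h1]
    exact h2
  · exact h1

lemma cycle_fst_nodup {w0 : α} {c : H.Walk w0 w0} (hc : c.IsCycle) :
    (c.darts.map (fun d => d.fst)).Nodup := by
  rw [Walk.map_fst_darts]
  have htne := cycle_tail_ne_nil hc
  have hlast : c.support.tail.getLast htne = w0 := cycle_getLast_tail hc
  have htail : c.support.tail.dropLast ++ [w0] = c.support.tail := by
    have h2 := List.dropLast_append_getLast htne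
    rwa [hlast] at h2
  have hnodup := hc.support_nodup
  have hw0 : w0 ∉ c.support.tail.dropLast := by
    rw [← htail] at hnodup
    rcases List.nodup_append.mp hnodup with ⟨_, _, hdisj⟩
    intro hmem
    exact hdisj _ hmem _ (by simp) rfl
  rw [Walk.support_eq_cons c, List.dropLast_cons_of_ne_nil htne]
  exact List.nodup_cons.mpr ⟨hw0, hc.support_nodup.sublist (List.dropLast_sublist _)⟩

lemma cycle_dart_eq_of_fst {w0 : α} {c : H.Walk w0 w0} (hc : c.IsCycle)
    {d d' : H.Dart} (hd : d ∈ c.darts) (hd' : d' ∈ c.darts)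
    (h : d.fst = d'.fst) : d = d' :=
  List.inj_on_of_nodup_map (cycle_fst_nodup hc) hd hd' h

lemma cycle_dart_eq_of_snd {w0 : α} {c : H.Walk w0 w0} (hc : c.IsCycle)
    {d d' : H.Dart} (hd : d ∈ c.darts) (hd' : d' ∈ c.darts)
    (h : d.snd = d'.snd) : d = d' :=
  List.inj_on_of_nodup_map (cycle_snd_nodup hc) hd hd' h

/-- at most two distinct darts of a cycle can touch a given vertex -/
lemma cycle_three_darts {w0 A : α} {c : H.Walk w0 w0} (hc : c.IsCycle)
    {d1 d2 d3 : H.Dart} (h1 : d1 ∈ c.darts) (h2 : d2 ∈ c.darts) (h3 : d3 ∈ c.darts)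
    (h12 : d1 ≠ d2) (h13 : d1 ≠ d3) (h23 : d2 ≠ d3)
    (ha1 : d1.fst = A ∨ d1.snd = A) (ha2 : d2.fst = A ∨ d2.snd = A)
    (ha3 : d3.fst = A ∨ d3.snd = A) : False := by
  rcases ha1 with ha1 | ha1 <;> rcases ha2 with ha2 | ha2 <;> rcases ha3 with ha3 | ha3
  · exact h12 (cycle_dart_eq_of_fst hc h1 h2 (ha1.trans ha2.symm))
  · exact h12 (cycle_dart_eq_of_fst hc h1 h2 (ha1.trans ha2.symm))
  · exact h13 (cycle_dart_eq_of_fst hc h1 h3 (ha1.trans ha3.symm))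
  · exact h23 (cycle_dart_eq_of_snd hc h2 h3 (ha2.trans ha3.symm))
  · exact h23 (cycle_dart_eq_of_fst hc h2 h3 (ha2.trans ha3.symm))
  · exact h13 (cycle_dart_eq_of_snd hc h1 h3 (ha1.trans ha3.symm))
  · exact h12 (cycle_dart_eq_of_snd hc h1 h2 (ha1.trans ha2.symm))
  · exact h12 (cycle_dart_eq_of_snd hc h1 h2 (ha1.trans ha2.symm))

/-- in a cycle, given a crossing dart, there is another crossing dart with a different edge -/
lemma exists_second_crossing (S : α → Prop) [DecidablePred S] {w0 : α}
    {c : H.Walk w0 w0} (hc : c.IsCycle) {d1 : H.Dart} (hd1 : d1 ∈ c.darts)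
    (hcr : crossb S d1 = true) :
    ∃ d2 ∈ c.darts, crossb S d2 = true ∧ d2.edge ≠ d1.edge := by
  have heven : Even (c.darts.countP (crossb S)) := (crossing_parity S c).mpr Iff.rfl
  rw [List.countP_eq_length_filter] at heven
  by_contra hno
  push_neg at hno
  have hall : ∀ d ∈ c.darts.filter (crossb S), d.edge = d1.edge := by
    intro d hd
    rcases List.mem_filter.mp hd with ⟨hd', hcr'⟩
    exact hno d hd' hcr'
  have hd1L : d1 ∈ c.darts.filter (crossb S) := List.mem_filter.mpr ⟨hd1, hcr⟩
  have hlen : 2 ≤ (c.darts.filter (crossb S)).length := by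
    have hne : (c.darts.filter (crossb S)).length ≠ 0 := by
      intro h
      rw [List.length_eq_zero_iff] at h
      rw [h] at hd1L
      simp at hd1L
    rcases heven with ⟨k, hk⟩
    omega
  have hnodupe : ((c.darts.filter (crossb S)).map (fun d => d.edge)).Nodup :=
    hc.edges_nodup.sublist ((List.filter_sublist).map _)
  obtain ⟨x, y, t, hxyt⟩ : ∃ x y t, c.darts.filter (crossb S) = x :: y :: t := by
    match h : c.darts.filter (crossb S), hlen with
    | x :: y :: t, _ => exact ⟨x, y, t, rfl⟩
  rw [hxyt] at hall hnodupe
  rcases List.nodup_cons.mp hnodupe with ⟨hx, _⟩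
  apply hx
  have e1 : x.edge = d1.edge := hall x (by simp)
  have e2 : y.edge = d1.edge := hall y (by simp)
  simp only [List.map_cons, List.mem_cons]
  left
  show x.edge = y.edge
  rw [e1, ← e2]

end CycleDarts

section Dicho

variable [DecidableEq V] {G : SimpleGraph V} {X : Set V}

lemma anc_iff (hT : T.IsTree) (r u v : V) : Anc T r u v ↔ anc hT r u v := by
  constructor
  · intro h; exact h _ (tpath_isPath hT r v)
  · intro h p hp
    rw [tpath_unique hT p hp]
    exact h

lemma inSpan_iff (hT : T.IsTree) (t b x : V) :
    InSpan T t b x ↔ x ∈ (tpath hT t b).support := by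
  constructor
  · intro h; exact h _ (tpath_isPath hT t b)
  · intro h p hp
    rw [tpath_unique hT p hp]
    exact h

lemma dart_edge_val (d : (G.induce Xᶜ).Dart) :
    Sym2.map Subtype.val d.edge = s((d.fst : V), (d.snd : V)) := by
  cases d with
  | mk p h => cases p; simp [SimpleGraph.Dart.edge, Sym2.map_pair_eq]

lemma vmap_inj : Function.Injective (Sym2.map (Subtype.val : ↥Xᶜ → V)) :=
  Sym2.map.injective Subtype.val_injective

/-- the dichotomy: a non-tree edge of a cycle either is in conflict with another
non-tree edge of the cycle, or the whole cycle lies in the subtree hanging below it -/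
lemma dicho (hT : T.IsTree) (r : V)
    (hdfs : ∀ a b : V, G.Adj a b → Anc T r a b ∨ Anc T r b a)
    {w0 : ↥Xᶜ} {c : (G.induce Xᶜ).Walk w0 w0} (hc : c.IsCycle)
    {d1 : (G.induce Xᶜ).Dart} (hd1 : d1 ∈ c.darts) {t b : V}
    (hedge : s(t, b) = s((d1.fst : V), (d1.snd : V)))
    (htb : anc hT r t b) (hnt : s(t, b) ∉ T.edgeSet) :
    (∃ t' b' : V, G.Adj t' b' ∧ anc hT r t' b' ∧ s(t', b') ∉ T.edgeSet ∧
      s(t', b') ∈ c.edges.map (Sym2.map Subtype.val) ∧ s(t', b') ≠ s(t, b) ∧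
      t ∈ (tpath hT t' b').support ∧ t ≠ b') ∨
    (∀ z ∈ c.support, (z : V) = t ∨ anc hT r ((tpath hT t b).getVert 1) (z : V)) := by
  classical
  obtain ⟨A, B, hA, hB, hd1AB⟩ : ∃ A B : ↥Xᶜ, (A : V) = t ∧ (B : V) = b ∧
      ((d1.fst = A ∧ d1.snd = B) ∨ (d1.fst = B ∧ d1.snd = A)) := by
    rw [Sym2.eq_iff] at hedge
    rcases hedge with ⟨h1, h2⟩ | ⟨h1, h2⟩
    · exact ⟨d1.fst, d1.snd, h1.symm, h2.symm, Or.inl ⟨rfl, rfl⟩⟩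
    · exact ⟨d1.snd, d1.fst, h1.symm, h2.symm, Or.inr ⟨rfl, rfl⟩⟩
  have hGtb : G.Adj t b := by
    rw [← hA, ← hB]
    rcases hd1AB with ⟨h1, h2⟩ | ⟨h1, h2⟩
    · rw [← h1, ← h2]; exact d1.adj
    · rw [← h1, ← h2]; exact (d1.adj).symm
  have htbne : t ≠ b := hGtb.ne
  have hqnil : ¬ (tpath hT t b).Nil := by
    rw [Walk.nil_iff_length_eq]
    intro h
    exact htbne (Walk.eq_of_length_eq_zero h)
  set c1 : V := (tpath hT t b).getVert 1 with hc1def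
  have hadjtc1 : T.Adj t c1 := (tpath hT t b).adj_snd hqnil
  have hc1mem : c1 ∈ (tpath hT t b).support := by
    have h1 := Walk.cons_support_tail hqnil
    rw [← h1]
    exact List.mem_cons_of_mem _ (Walk.start_mem_support (tpath hT t b).tail)
  have htc1 : anc hT r t c1 := ((mem_span_iff hT r htb).mp hc1mem).1
  have hc1b : anc hT r c1 b := ((mem_span_iff hT r htb).mp hc1mem).2
  have hc1t : ¬ anc hT r c1 t := fun h => hadjtc1.ne (anc_antisymm hT r htc1 h)
  have hc1ne : c1 ≠ t := hadjtc1.ne'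
  set S : ↥Xᶜ → Prop := fun z => anc hT r c1 (z : V) with hSdef
  have hSiff : ∀ z : ↥Xᶜ, S z ↔ anc hT r c1 (z : V) := fun z => Iff.rfl
  have hSA : ¬ S A := by rw [hSiff]; rw [hA]; exact hc1t
  have hSB : S B := by rw [hSiff]; rw [hB]; exact hc1b
  have hcr1 : crossb S d1 = true := by
    have hfs : ¬ (S d1.fst ↔ S d1.snd) := by
      rcases hd1AB with ⟨h1, h2⟩ | ⟨h1, h2⟩
      · rw [h1, h2]; intro h; exact hSA (h.mpr hSB)
      · rw [h1, h2]; intro h; exact hSA (h.mp hSB)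
    exact bne_iff_ne.mpr (fun h => hfs (decide_eq_decide.mp h))
  have key : ∀ d2 ∈ c.darts, crossb S d2 = true → d2.edge ≠ d1.edge →
      ∃ P Q : ↥Xᶜ, (d2.fst = P ∧ d2.snd = Q ∨ d2.fst = Q ∧ d2.snd = P) ∧
        ¬ S P ∧ S Q ∧ G.Adj (P : V) (Q : V) ∧ anc hT r (P : V) (Q : V) ∧
        anc hT r (P : V) t ∧ anc hT r t (Q : V) ∧ t ≠ (Q : V) ∧
        Sym2.map Subtype.val d2.edge = s((P : V), (Q : V)) := by
    intro d2 hd2 hcr2 hne2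
    have hcr2' : ¬ (S d2.fst ↔ S d2.snd) := by
      intro h
      have h2 : decide (S d2.fst) ≠ decide (S d2.snd) := bne_iff_ne.mp hcr2
      exact h2 (decide_eq_decide.mpr h)
    obtain ⟨P, Q, hPQ, hP, hQ⟩ : ∃ P Q : ↥Xᶜ,
        (d2.fst = P ∧ d2.snd = Q ∨ d2.fst = Q ∧ d2.snd = P) ∧ ¬ S P ∧ S Q := by
      by_cases h : S d2.fst
      · exact ⟨d2.snd, d2.fst, Or.inr ⟨rfl, rfl⟩, fun hh => hcr2' ⟨fun _ => hh, fun _ => h⟩, h⟩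
      · refine ⟨d2.fst, d2.snd, Or.inl ⟨rfl, rfl⟩, h, ?_⟩
        by_contra hh
        exact hcr2' ⟨fun h1 => absurd h1 h, fun h2 => absurd h2 hh⟩
    have hP' : ¬ anc hT r c1 (P : V) := by rw [← hSiff]; exact hP
    have hQ' : anc hT r c1 (Q : V) := by rw [← hSiff]; exact hQ
    have hGPQ : G.Adj (P : V) (Q : V) := by
      rcases hPQ with ⟨h1, h2⟩ | ⟨h1, h2⟩
      · rw [← h1, ← h2]; exact d2.adj
      · rw [← h1, ← h2]; exact (d2.adj).symm
    have hancPQ : anc hT r (P : V) (Q : V) := by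
      rcases (hdfs _ _ hGPQ) with h | h
      · rwa [anc_iff hT r] at h
      · rw [anc_iff hT r] at h
        exact absurd (anc_trans hT r hQ' h) hP'
    have hPc1 : anc hT r (P : V) c1 := by
      rcases anc_total hT r hancPQ hQ' with h | h
      · exact h
      · exact absurd h hP'
    have hPt : anc hT r (P : V) t := by
      rcases anc_total hT r hPc1 htc1 with h | h
      · exact h
      · rcases squeeze_eq hT r hadjtc1 htc1 h hPc1 with h1 | h1
        · rw [h1]; exact anc_refl hT r t
        · rw [h1] at hP'
          exact absurd (anc_refl hT r c1) hP'
    have htQ : anc hT r t (Q : V) := anc_trans hT r htc1 hQ'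
    have htQne : t ≠ (Q : V) := by
      intro h
      rw [← h] at hQ'
      exact hc1t hQ'
    have hedge2 : Sym2.map Subtype.val d2.edge = s((P : V), (Q : V)) := by
      rw [dart_edge_val]
      rcases hPQ with ⟨h1, h2⟩ | ⟨h1, h2⟩
      · rw [h1, h2]
      · rw [h1, h2, Sym2.eq_swap]
    exact ⟨P, Q, hPQ, hP, hQ, hGPQ, hancPQ, hPt, htQ, htQne, hedge2⟩
  by_cases hgood : ∃ d ∈ c.darts, crossb S d = true ∧ d.edge ≠ d1.edge ∧
      Sym2.map Subtype.val d.edge ∉ T.edgeSet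
  · left
    obtain ⟨d2, hd2, hcr2, hne2, hnt2⟩ := hgood
    obtain ⟨P, Q, hPQ, hP, hQ, hGPQ, hancPQ, hPt, htQ, htQne, hedge2⟩ := key d2 hd2 hcr2 hne2
    have hQ' : anc hT r c1 (Q : V) := by rw [← hSiff]; exact hQ
    refine ⟨(P : V), (Q : V), hGPQ, hancPQ, by rwa [← hedge2], ?_, ?_, ?_, htQne⟩
    · rw [← hedge2]
      exact List.mem_map_of_mem (List.mem_map_of_mem (f := Dart.edge) hd2)
    · rw [← hedge2, hedge]
      intro h
      exact hne2 (vmap_inj (h.trans (dart_edge_val d1).symm))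
    · exact (mem_span_iff hT r hancPQ).mpr ⟨hPt, anc_trans hT r htc1 hQ'⟩
  · right
    push_neg at hgood
    -- any crossing dart other than d1 is the tree edge between t and c1
    have treekey : ∀ d3 ∈ c.darts, crossb S d3 = true → d3.edge ≠ d1.edge →
        ∃ P3 Q3 : ↥Xᶜ, (d3.fst = P3 ∧ d3.snd = Q3 ∨ d3.fst = Q3 ∧ d3.snd = P3) ∧
          (P3 : V) = t ∧ (Q3 : V) = c1 ∧ ¬ S P3 ∧ S Q3 := by
      intro d3 hd3 hcr3 hne3
      obtain ⟨P, Q, hPQ, hP, hQ, hGPQ, hancPQ, hPt, htQ, htQne, hedge3⟩ := key d3 hd3 hcr3 hne3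
      have hP' : ¬ anc hT r c1 (P : V) := by rw [← hSiff]; exact hP
      have hQ' : anc hT r c1 (Q : V) := by rw [← hSiff]; exact hQ
      have hTPQ : T.Adj (P : V) (Q : V) := by
        rw [← SimpleGraph.mem_edgeSet, ← hedge3]
        exact hgood d3 hd3 hcr3 hne3
      have hQc1 : (Q : V) = c1 := by
        by_contra hne
        exact hP' (anc_of_anc_adj hT r hTPQ hancPQ hQ' (fun h => hne h.symm))
      have hPeqt : (P : V) = t := by
        rw [hQc1] at hTPQ hancPQ
        exact parent_unique hT r hTPQ hadjtc1 hancPQ htc1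
      exact ⟨P, Q, hPQ, hPeqt, hQc1, hP, hQ⟩
    obtain ⟨d2, hd2, hcr2, hne2⟩ := exists_second_crossing S hc hd1 hcr1
    obtain ⟨P2, Q2, hPQ2, hP2t, hQ2c1, hP2, hQ2⟩ := treekey d2 hd2 hcr2 hne2
    intro z hz
    by_contra hzcon
    push_neg at hzcon
    obtain ⟨hzt, hzS⟩ := hzcon
    set S' : ↥Xᶜ → Prop := fun w => S w ∨ (w : V) = t with hS'def
    have hS'iff : ∀ w : ↥Xᶜ, S' w ↔ (S w ∨ (w : V) = t) := fun w => Iff.rfl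
    -- every dart of the cycle exiting S' starts at A and differs from d1, d2
    have key' : ∀ d3 ∈ c.darts, S' d3.fst → ¬ S' d3.snd →
        d3.fst = A ∧ d3 ≠ d1 ∧ d3 ≠ d2 := by
      intro d3 hd3 h3f h3s
      rw [hS'iff] at h3s h3f
      push_neg at h3s
      obtain ⟨h3sS, h3st⟩ := h3s
      -- first : the start of d3 cannot be inside S
      have h3fS : ¬ S d3.fst := by
        intro hfS
        have hcr3 : crossb S d3 = true :=
          bne_iff_ne.mpr (fun h => h3sS ((decide_eq_decide.mp h).mp hfS))
        by_cases hne3 : d3.edge = d1.edge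
        · rcases (dart_edge_eq_iff d3 d1).mp hne3 with h1 | h1
          · -- d3 = d1 : snd d3 = d1.snd
            rcases hd1AB with ⟨h2, h3⟩ | ⟨h2, h3⟩
            · apply h3sS; rw [h1, h3, hSiff, hB]; exact hc1b
            · apply h3st; rw [h1, h3, hA]
          · -- d3 = d1.symm : snd d3 = d1.fst
            have hs : d3.snd = d1.fst := by rw [h1]; rfl
            rcases hd1AB with ⟨h2, h3⟩ | ⟨h2, h3⟩
            · apply h3st; rw [hs, h2, hA]
            · apply h3sS; rw [hs, h2, hSiff, hB]; exact hc1b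
        · obtain ⟨P3, Q3, hPQ3, hP3t, hQ3c1, hP3, hQ3⟩ := treekey d3 hd3 hcr3 hne3
          rcases hPQ3 with ⟨h1, h2⟩ | ⟨h1, h2⟩
          · apply h3sS; rw [h2]; exact hQ3
          · apply h3st; rw [h2]; exact hP3t
      -- so the start of d3 has value t
      have h3ft : (d3.fst : V) = t := by
        rcases h3f with h | h
        · exact absurd h h3fS
        · exact h
      refine ⟨Subtype.ext (by rw [h3ft, hA]), ?_, ?_⟩
      · intro h
        rw [h] at h3sS h3st
        rcases hd1AB with ⟨h2, h3⟩ | ⟨h2, h3⟩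
        · apply h3sS; rw [h3, hSiff, hB]; exact hc1b
        · apply h3st; rw [h3, hA]
      · intro h
        rw [h] at h3sS h3st
        rcases hPQ2 with ⟨h2, h3⟩ | ⟨h2, h3⟩
        · apply h3sS; rw [h3, hSiff, hQ2c1]; exact anc_refl hT r c1
        · apply h3st; rw [h3, hP2t]
    -- extract an exiting dart from the part of the cycle from b to z
    have hBmem : B ∈ c.support := by
      rcases hd1AB with ⟨h1, h2⟩ | ⟨h1, h2⟩
      · rw [← h2]; exact Walk.dart_snd_mem_support_of_mem_darts _ hd1
      · rw [← h1]; exact Walk.dart_fst_mem_support_of_mem_darts _ hd1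
    have hzw : z ∈ (c.rotate B hBmem).support := by
      have h1 : z ∈ c.support.tail := cycle_mem_support_tail hc hz
      have h2 : z ∈ (c.rotate B hBmem).support.tail :=
        ((Walk.support_rotate c B hBmem).mem_iff).mpr h1
      rw [Walk.support_eq_cons (c.rotate B hBmem)]
      exact List.mem_cons_of_mem _ h2
    have hS'B : S' B := Or.inl hSB
    have hS'z : ¬ S' z := by
      rintro (h | h)
      · exact hzS h
      · exact hzt h
    obtain ⟨d3, hd3w1, h3f, h3s⟩ :=
      exists_exit_dart S' ((c.rotate B hBmem).takeUntil z hzw) hS'B hS'z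
    have hd3 : d3 ∈ c.darts := by
      have h1 := Walk.darts_takeUntil_subset (c.rotate B hBmem) hzw hd3w1
      exact ((Walk.rotate_darts c B hBmem).mem_iff).mp h1
    obtain ⟨hfA, hne31, hne32⟩ := key' d3 hd3 h3f h3s
    -- three distinct darts of the cycle touch the vertex A : contradiction
    have hd1A : d1.fst = A ∨ d1.snd = A := by
      rcases hd1AB with ⟨h1, h2⟩ | ⟨h1, h2⟩
      · exact Or.inl h1
      · exact Or.inr h2
    have hd2A : d2.fst = A ∨ d2.snd = A := by
      rcases hPQ2 with ⟨h1, h2⟩ | ⟨h1, h2⟩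
      · exact Or.inl (by rw [h1]; exact Subtype.ext (by rw [hP2t, hA]))
      · exact Or.inr (by rw [h2]; exact Subtype.ext (by rw [hP2t, hA]))
    have hne12 : d1 ≠ d2 := by
      intro h
      exact hne2 (by rw [h])
    exact cycle_three_darts hc hd1 hd2 hd3 hne12 (Ne.symm hne31) (Ne.symm hne32)
      hd1A hd2A (Or.inl hfA)

end Dicho

section Unique

variable [DecidableEq V] {G : SimpleGraph V} {X : Set V}

/-- the inclusion homomorphism from an induced subgraph -/
def fval : (G.induce Xᶜ) →g G := ⟨Subtype.val, fun {a b} h => h⟩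

@[simp] lemma fval_apply (a : ↥Xᶜ) : (fval (G := G) (X := X)) a = (a : V) := rfl

lemma fval_coe : ⇑(fval (G := G) (X := X)) = (Subtype.val : ↥Xᶜ → V) := rfl

/-- every cycle of G - X contains a non-tree edge -/
lemma exists_nontree (hT : T.IsTree) (r : V)
    (hdfs : ∀ a b : V, G.Adj a b → Anc T r a b ∨ Anc T r b a)
    {w0 : ↥Xᶜ} {c : (G.induce Xᶜ).Walk w0 w0} (hc : c.IsCycle) :
    ∃ d1 ∈ c.darts, ∃ t b : V, s(t, b) = s((d1.fst : V), (d1.snd : V)) ∧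
      G.Adj t b ∧ anc hT r t b ∧ s(t, b) ∉ T.edgeSet := by
  by_cases hall : ∀ d ∈ c.darts, s((d.fst : V), (d.snd : V)) ∈ T.edgeSet
  · exfalso
    have hmapcyc : (c.map fval).IsCycle := hc.map Subtype.val_injective
    have hedgesT : ∀ e ∈ (c.map fval).edges, e ∈ T.edgeSet := by
      intro e he
      rw [Walk.edges_map] at he
      obtain ⟨e', he', rfl⟩ := List.mem_map.mp he
      obtain ⟨d, hd, rfl⟩ := List.mem_map.mp he'
      rw [fval_coe, dart_edge_val]
      exact hall d hd
    have htcyc : ((c.map fval).transfer T hedgesT).IsCycle := hmapcyc.transfer hedgesT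
    exact hT.IsAcyclic _ htcyc
  · push_neg at hall
    obtain ⟨d, hd, hdnt⟩ := hall
    have hadj : G.Adj (d.fst : V) (d.snd : V) := d.adj
    rcases hdfs _ _ hadj with h | h
    · exact ⟨d, hd, (d.fst : V), (d.snd : V), rfl, hadj, (anc_iff hT r _ _).mp h, hdnt⟩
    · refine ⟨d, hd, (d.snd : V), (d.fst : V), Sym2.eq_swap, hadj.symm,
        (anc_iff hT r _ _).mp h, ?_⟩
      rwa [Sym2.eq_swap]

/-- if a cycle contains a single non-tree edge, it consists of that edge together
with the tree path joining its endpoints -/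
lemma unique_nontree (hT : T.IsTree) (r : V)
    {w0 : ↥Xᶜ} {c : (G.induce Xᶜ).Walk w0 w0} (hc : c.IsCycle)
    {d1 : (G.induce Xᶜ).Dart} (hd1 : d1 ∈ c.darts) {t b : V}
    (hedge : s(t, b) = s((d1.fst : V), (d1.snd : V)))
    (huniq : ∀ d ∈ c.darts, s((d.fst : V), (d.snd : V)) ∉ T.edgeSet → d.edge = d1.edge) :
    (∀ z ∈ c.support, (z : V) ∈ (tpath hT t b).support) ∧
    (∀ f : Sym2 ↥Xᶜ, f ∈ c.edges ↔
      (f = d1.edge ∨ Sym2.map Subtype.val f ∈ (tpath hT t b).edges)) := by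
  classical
  have hfst : d1.fst ∈ c.support := Walk.dart_fst_mem_support_of_mem_darts _ hd1
  set w := c.rotate d1.fst hfst with hwdef
  have hwcyc : w.IsCycle := hc.rotate hfst
  have hwne : ¬ w.Nil := by
    rw [Walk.not_nil_iff_lt_length]
    have := hwcyc.three_le_length
    omega
  have hhead : Walk.cons (w.adj_snd hwne) w.tail = w := Walk.cons_tail_eq w hwne
  have hd1w : d1 ∈ w.darts := ((Walk.rotate_darts c d1.fst hfst).mem_iff).mpr hd1
  have hdartsw : w.darts =
      (SimpleGraph.Dart.mk (d1.fst, w.getVert 1) (w.adj_snd hwne)) :: w.tail.darts := by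
    conv_lhs => rw [← hhead]
    rw [Walk.darts_cons]
  have hd1first : d1 = SimpleGraph.Dart.mk (d1.fst, w.getVert 1) (w.adj_snd hwne) :=
    cycle_dart_eq_of_fst hwcyc hd1w (by rw [hdartsw]; exact List.mem_cons_self) rfl
  have hsnd : d1.snd = w.getVert 1 := by
    have := congrArg (fun d : (G.induce Xᶜ).Dart => d.snd) hd1first
    exact this
  have hwcyc' : (Walk.cons (w.adj_snd hwne) w.tail).IsCycle := by
    rw [hhead]; exact hwcyc
  obtain ⟨hqpath, hqe⟩ := (Walk.cons_isCycle_iff w.tail (w.adj_snd hwne)).mp hwcyc'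
  have hd1edge : d1.edge = s(d1.fst, w.getVert 1) := by
    have := congrArg Dart.edge hd1first
    exact this
  -- all darts of the tail are tree edges
  have htailT : ∀ d ∈ w.tail.darts, s((d.fst : V), (d.snd : V)) ∈ T.edgeSet := by
    intro d hd
    by_contra hnt
    have hdc : d ∈ c.darts := by
      apply ((Walk.rotate_darts c d1.fst hfst).mem_iff).mp
      rw [hdartsw]
      exact List.mem_cons_of_mem _ hd
    have := huniq d hdc hnt
    apply hqe
    rw [← hd1edge, ← this]
    exact List.mem_map_of_mem (f := Dart.edge) hd
  -- transfer the tail to the tree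
  have hmapT : ∀ e ∈ (w.tail.map fval).edges, e ∈ T.edgeSet := by
    intro e he
    rw [Walk.edges_map] at he
    obtain ⟨e', he', rfl⟩ := List.mem_map.mp he
    obtain ⟨d, hd, rfl⟩ := List.mem_map.mp he'
    rw [fval_coe, dart_edge_val]
    exact htailT d hd
  set qT : T.Walk ((w.getVert 1 : ↥Xᶜ) : V) ((d1.fst : ↥Xᶜ) : V) :=
    (w.tail.map fval).transfer T hmapT with hqTdef
  have hqTpath : qT.IsPath :=
    (Walk.map_isPath_of_injective Subtype.val_injective hqpath).transfer hmapT
  have hqTsupp : qT.support = (w.tail.support).map Subtype.val := by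
    show ((w.tail.map fval).transfer T hmapT).support = _
    rw [Walk.support_transfer, Walk.support_map]
    rfl
  have hqTedges : qT.edges = (w.tail.edges).map (Sym2.map Subtype.val) := by
    show ((w.tail.map fval).transfer T hmapT).edges = _
    rw [Walk.edges_transfer, Walk.edges_map, fval_coe]
  -- identify the tree path
  have hsupp : ∀ x : V, x ∈ (tpath hT t b).support ↔ x ∈ qT.support := by
    rcases Sym2.eq_iff.mp hedge with ⟨h1, h2⟩ | ⟨h1, h2⟩
    · -- t is the value of d1.fst, b of d1.snd
      have : qT.reverse = tpath hT ((d1.fst : V)) ((w.getVert 1 : ↥Xᶜ) : V) :=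
        tpath_unique hT _ hqTpath.reverse
      intro x
      rw [h1, h2, hsnd, ← this, Walk.support_reverse, List.mem_reverse]
    · have : qT = tpath hT ((w.getVert 1 : ↥Xᶜ) : V) ((d1.fst : V)) :=
        tpath_unique hT _ hqTpath
      intro x
      rw [h1, h2, hsnd, ← this]
  have hedgesiff : ∀ e : Sym2 V, e ∈ (tpath hT t b).edges ↔ e ∈ qT.edges := by
    rcases Sym2.eq_iff.mp hedge with ⟨h1, h2⟩ | ⟨h1, h2⟩
    · have : qT.reverse = tpath hT ((d1.fst : V)) ((w.getVert 1 : ↥Xᶜ) : V) :=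
        tpath_unique hT _ hqTpath.reverse
      intro e
      rw [h1, h2, hsnd, ← this, Walk.edges_reverse, List.mem_reverse]
    · have : qT = tpath hT ((w.getVert 1 : ↥Xᶜ) : V) ((d1.fst : V)) :=
        tpath_unique hT _ hqTpath
      intro e
      rw [h1, h2, hsnd, ← this]
  constructor
  · intro z hz
    have hzw : z ∈ w.support := by
      have h1 : z ∈ c.support.tail := cycle_mem_support_tail hc hz
      have h2 := ((Walk.support_rotate c d1.fst hfst).mem_iff).mpr h1
      rw [Walk.support_eq_cons w]
      exact List.mem_cons_of_mem _ h2
    rw [← hhead, Walk.support_cons] at hzw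
    rcases List.mem_cons.mp hzw with h1 | h1
    · rw [hsupp, h1, hqTdef]
      have : ((d1.fst : ↥Xᶜ) : V) ∈ qT.support := Walk.end_mem_support qT
      exact this
    · rw [hsupp, hqTsupp]
      exact List.mem_map_of_mem h1
  · intro f
    have hcw : f ∈ c.edges ↔ f ∈ w.edges := ((Walk.rotate_edges c d1.fst hfst).mem_iff).symm
    have hwe : w.edges = d1.edge :: w.tail.edges := by
      conv_lhs => rw [← hhead]
      rw [Walk.edges_cons, ← hd1edge]
    rw [hcw, hwe]
    constructor
    · intro hf
      rcases List.mem_cons.mp hf with h1 | h1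
      · exact Or.inl h1
      · right
        rw [hedgesiff, hqTedges]
        exact List.mem_map_of_mem h1
    · intro hf
      rcases hf with h1 | h1
      · rw [h1]; exact List.mem_cons_self
      · rw [hedgesiff, hqTedges] at h1
        obtain ⟨f', hf', hff⟩ := List.mem_map.mp h1
        have : f' = f := vmap_inj hff
        rw [← this]
        exact List.mem_cons_of_mem _ hf'

end Unique

section Child

variable [DecidableEq V]

lemma span_child (hT : T.IsTree) (r : V) {t b : V} (htb : anc hT r t b) (hne : t ≠ b) :
    T.Adj t ((tpath hT t b).getVert 1) ∧ anc hT r t ((tpath hT t b).getVert 1) ∧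
    anc hT r ((tpath hT t b).getVert 1) b ∧ ¬ anc hT r ((tpath hT t b).getVert 1) t := by
  have hqnil : ¬ (tpath hT t b).Nil := by
    rw [Walk.nil_iff_length_eq]
    intro h
    exact hne (Walk.eq_of_length_eq_zero h)
  have hadj : T.Adj t ((tpath hT t b).getVert 1) := (tpath hT t b).adj_snd hqnil
  have hmem : (tpath hT t b).getVert 1 ∈ (tpath hT t b).support := by
    have h1 := Walk.cons_support_tail hqnil
    rw [← h1]
    exact List.mem_cons_of_mem _ (Walk.start_mem_support (tpath hT t b).tail)
  have h1 := (mem_span_iff hT r htb).mp hmem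
  exact ⟨hadj, h1.1, h1.2, fun h => hadj.ne (anc_antisymm hT r h1.1 h)⟩

lemma anc_length_lt (hT : T.IsTree) (r : V) {u v : V} (h : anc hT r u v) (hne : u ≠ v) :
    (tpath hT r u).length < (tpath hT r v).length := by
  have h1 := length_tpath_add hT r h
  have h2 : (tpath hT u v).length ≠ 0 := by
    intro h3
    exact hne (Walk.eq_of_length_eq_zero h3)
  omega

end Child

end Stmt4Aux

open Stmt4Aux in
/-- If two distinct cycles of `G − X` share at least two vertices, then there are two
    distinct non-tree edges, both active in `X`, that have a conflict. -/
theorem stmt4 {V : Type*} [Fintype V] (G T : SimpleGraph V) (hsub : T ≤ G)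
    (hT : T.IsTree) (r : V)
    (hdfs : ∀ a b : V, G.Adj a b → Anc T r a b ∨ Anc T r b a)
    (X : Set V) (u v : ↥Xᶜ)
    (C : (G.induce Xᶜ).Walk u u) (C' : (G.induce Xᶜ).Walk v v)
    (hC : C.IsCycle) (hC' : C'.IsCycle)
    (hdistinct : {e | e ∈ C.edges} ≠ {e | e ∈ C'.edges})
    (hcommon : ∃ x y : ↥Xᶜ, x ≠ y ∧ x ∈ C.support ∧ x ∈ C'.support ∧
      y ∈ C.support ∧ y ∈ C'.support) :
    ∃ t b t' b' : V, G.Adj t b ∧ G.Adj t' b' ∧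
      s(t, b) ∉ T.edgeSet ∧ s(t', b') ∉ T.edgeSet ∧
      Anc T r t b ∧ Anc T r t' b' ∧ s(t, b) ≠ s(t', b') ∧
      ActiveIn G X s(t, b) ∧ ActiveIn G X s(t', b') ∧ Conflict T t b t' b' := by
  classical
  -- the main goal
  set GOAL : Prop := ∃ t b t' b' : V, G.Adj t b ∧ G.Adj t' b' ∧
      s(t, b) ∉ T.edgeSet ∧ s(t', b') ∉ T.edgeSet ∧
      Anc T r t b ∧ Anc T r t' b' ∧ s(t, b) ≠ s(t', b') ∧
      ActiveIn G X s(t, b) ∧ ActiveIn G X s(t', b') ∧ Conflict T t b t' b' with hGOAL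
  show GOAL
  -- a cycle containing two non-tree edges yields the goal
  have KEY : ∀ (v0 : ↥Xᶜ) (D : (G.induce Xᶜ).Walk v0 v0), D.IsCycle →
      ∀ d ∈ D.darts, ∀ t b : V, s(t, b) = s((d.fst : V), (d.snd : V)) →
      G.Adj t b → anc hT r t b → s(t, b) ∉ T.edgeSet →
      (∃ d' ∈ D.darts, s((d'.fst : V), (d'.snd : V)) ∉ T.edgeSet ∧ d'.edge ≠ d.edge) →
      GOAL := by
    intro v0 D hD d hd t b hedge hG htb hnt hsec
    have hmem0 : s(t, b) ∈ D.edges.map (Sym2.map Subtype.val) := by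
      rw [hedge, ← dart_edge_val]
      exact List.mem_map_of_mem (List.mem_map_of_mem (f := Dart.edge) hd)
    have hact0 : ActiveIn G X s(t, b) := ⟨v0, D, hD, hmem0⟩
    obtain ⟨d', hd', hnt2', hne2'⟩ := hsec
    -- orient the second non-tree edge
    obtain ⟨t2, b2, hedge2, hG2, hanc2, hnt2⟩ : ∃ t2 b2 : V,
        s(t2, b2) = s((d'.fst : V), (d'.snd : V)) ∧ G.Adj t2 b2 ∧
        anc hT r t2 b2 ∧ s(t2, b2) ∉ T.edgeSet := by
      have hadj2 : G.Adj (d'.fst : V) (d'.snd : V) := d'.adj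
      rcases hdfs _ _ hadj2 with h | h
      · exact ⟨_, _, rfl, hadj2, (anc_iff hT r _ _).mp h, hnt2'⟩
      · refine ⟨_, _, Sym2.eq_swap, hadj2.symm, (anc_iff hT r _ _).mp h, ?_⟩
        rwa [Sym2.eq_swap]
    have hmem2 : s(t2, b2) ∈ D.edges.map (Sym2.map Subtype.val) := by
      rw [hedge2, ← dart_edge_val]
      exact List.mem_map_of_mem (List.mem_map_of_mem (f := Dart.edge) hd')
    have hact2 : ActiveIn G X s(t2, b2) := ⟨v0, D, hD, hmem2⟩
    have hedgene : s(t, b) ≠ s(t2, b2) := by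
      rw [hedge, hedge2, ← dart_edge_val, ← dart_edge_val]
      intro h
      exact hne2' (vmap_inj h.symm)
    obtain ⟨hadjc1, htc1, hc1b, hc1t⟩ := span_child hT r htb hG.ne
    obtain ⟨hadjc2, htc2, hc2b, hc2t⟩ := span_child hT r hanc2 hG2.ne
    -- vertices realizing the tops
    obtain ⟨z2, hz2val, hz2mem⟩ : ∃ z2 : ↥Xᶜ, (z2 : V) = t2 ∧ z2 ∈ D.support := by
      rcases Sym2.eq_iff.mp hedge2 with ⟨h1, h2⟩ | ⟨h1, h2⟩
      · exact ⟨d'.fst, h1.symm, Walk.dart_fst_mem_support_of_mem_darts _ hd'⟩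
      · exact ⟨d'.snd, h1.symm, Walk.dart_snd_mem_support_of_mem_darts _ hd'⟩
    obtain ⟨z1, hz1val, hz1mem⟩ : ∃ z1 : ↥Xᶜ, (z1 : V) = t ∧ z1 ∈ D.support := by
      rcases Sym2.eq_iff.mp hedge with ⟨h1, h2⟩ | ⟨h1, h2⟩
      · exact ⟨d.fst, h1.symm, Walk.dart_fst_mem_support_of_mem_darts _ hd⟩
      · exact ⟨d.snd, h1.symm, Walk.dart_snd_mem_support_of_mem_darts _ hd⟩
    rcases dicho hT r hdfs hD hd hedge htb hnt with
      ⟨t', b', hGa, hanca, hnta, hmema, hnea, hspana, hneba⟩ | hbad1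
    · exact ⟨t, b, t', b', hG, hGa, hnt, hnta, (anc_iff hT r t b).mpr htb,
        (anc_iff hT r t' b').mpr hanca, hnea.symm, hact0, ⟨v0, D, hD, hmema⟩,
        Or.inr ⟨(inSpan_iff hT t' b' t).mpr hspana, hneba⟩⟩
    rcases hbad1 z2 hz2mem with hz2t | hz2anc
    · -- the tops coincide
      have ht2t : t2 = t := by rw [← hz2val, hz2t]
      refine ⟨t, b, t2, b2, hG, hG2, hnt, hnt2, (anc_iff hT r t b).mpr htb,
        (anc_iff hT r t2 b2).mpr hanc2, hedgene, hact0, hact2, ?_⟩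
      exact Or.inl ⟨(inSpan_iff hT t b t2).mpr (by rw [ht2t]; exact Walk.start_mem_support _),
        by rw [ht2t]; exact hG.ne⟩
    rw [hz2val] at hz2anc
    have hanc_t_t2 : anc hT r t t2 := anc_trans hT r htc1 hz2anc
    have hne_t_t2 : t ≠ t2 := by
      intro h
      rw [← h] at hz2anc
      exact hc1t hz2anc
    rcases dicho hT r hdfs hD hd' hedge2 hanc2 hnt2 with
      ⟨t', b', hGa, hanca, hnta, hmema, hnea, hspana, hneba⟩ | hbad2
    · exact ⟨t2, b2, t', b', hG2, hGa, hnt2, hnta, (anc_iff hT r t2 b2).mpr hanc2,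
        (anc_iff hT r t' b').mpr hanca, hnea.symm, hact2, ⟨v0, D, hD, hmema⟩,
        Or.inr ⟨(inSpan_iff hT t' b' t2).mpr hspana, hneba⟩⟩
    rcases hbad2 z1 hz1mem with hz1t | hz1anc
    · exact absurd (by rw [← hz1val, hz1t]) (Ne.symm hne_t_t2)
    rw [hz1val] at hz1anc
    have hanc_t2_t : anc hT r t2 t := anc_trans hT r htc2 hz1anc
    exact absurd (anc_antisymm hT r hanc_t_t2 hanc_t2_t) hne_t_t2
  -- non-tree edges of the two cycles
  obtain ⟨d1, hd1, t1, b1, hedge1, hG1, hanc1, hnt1⟩ := exists_nontree hT r hdfs hC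
  obtain ⟨d1', hd1', t1', b1', hedge1', hG1', hanc1', hnt1'⟩ := exists_nontree hT r hdfs hC'
  by_cases hsecC : ∃ d' ∈ C.darts, s((d'.fst : V), (d'.snd : V)) ∉ T.edgeSet ∧ d'.edge ≠ d1.edge
  · exact KEY u C hC d1 hd1 t1 b1 hedge1 hG1 hanc1 hnt1 hsecC
  by_cases hsecC' : ∃ d' ∈ C'.darts, s((d'.fst : V), (d'.snd : V)) ∉ T.edgeSet ∧ d'.edge ≠ d1'.edge
  · exact KEY v C' hC' d1' hd1' t1' b1' hedge1' hG1' hanc1' hnt1' hsecC'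
  -- both cycles contain a unique non-tree edge
  push_neg at hsecC hsecC'
  have huniqC : ∀ d ∈ C.darts, s((d.fst : V), (d.snd : V)) ∉ T.edgeSet → d.edge = d1.edge := by
    intro d hd hdnt
    by_contra h
    exact h (hsecC d hd hdnt)
  have huniqC' : ∀ d ∈ C'.darts, s((d.fst : V), (d.snd : V)) ∉ T.edgeSet → d.edge = d1'.edge := by
    intro d hd hdnt
    by_contra h
    exact h (hsecC' d hd hdnt)
  obtain ⟨hsuppC, hedgesC⟩ := unique_nontree hT r hC hd1 hedge1 huniqC
  obtain ⟨hsuppC', hedgesC'⟩ := unique_nontree hT r hC' hd1' hedge1' huniqC'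
  have hneq : s(t1, b1) ≠ s(t1', b1') := by
    intro heq
    -- equal non-tree edges force the two cycles to have the same edges
    apply hdistinct
    have hd1eq : d1'.edge = d1.edge := by
      apply vmap_inj
      rw [dart_edge_val, dart_edge_val, ← hedge1, ← hedge1', heq]
    obtain ⟨ht1, hb1⟩ : t1' = t1 ∧ b1' = b1 := by
      rcases Sym2.eq_iff.mp heq with ⟨h1, h2⟩ | ⟨h1, h2⟩
      · exact ⟨h1.symm, h2.symm⟩
      · exfalso
        rw [← h2, ← h1] at hanc1'
        exact hG1.ne (anc_antisymm hT r hanc1 hanc1')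
    ext f
    simp only [Set.mem_setOf_eq]
    rw [hedgesC f, hedgesC' f, hd1eq, ht1, hb1]
  -- shared vertices give a conflict
  obtain ⟨x, y, hxy, hxC, hxC', hyC, hyC'⟩ := hcommon
  have hvx1 := hsuppC x hxC
  have hvx2 := hsuppC' x hxC'
  have hvy1 := hsuppC y hyC
  have hvy2 := hsuppC' y hyC'
  have hvxy : (x : V) ≠ (y : V) := fun h => hxy (Subtype.ext h)
  -- a helper for the two symmetric orders of x and y
  have main : ∀ a c : V, a ≠ c →
      a ∈ (tpath hT t1 b1).support → a ∈ (tpath hT t1' b1').support →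
      c ∈ (tpath hT t1 b1).support → c ∈ (tpath hT t1' b1').support →
      anc hT r a c → GOAL := by
    intro a c hac ha1 ha2 hc1 hc2 hancac
    obtain ⟨hta, hab⟩ := (mem_span_iff hT r hanc1).mp ha1
    obtain ⟨hta', hab'⟩ := (mem_span_iff hT r hanc1').mp ha2
    obtain ⟨htc, hcb⟩ := (mem_span_iff hT r hanc1).mp hc1
    obtain ⟨htc', hcb'⟩ := (mem_span_iff hT r hanc1').mp hc2
    have hact1 : ActiveIn G X s(t1, b1) := ⟨u, C, hC, by
      rw [hedge1, ← dart_edge_val]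
      exact List.mem_map_of_mem (List.mem_map_of_mem (f := Dart.edge) hd1)⟩
    have hact1' : ActiveIn G X s(t1', b1') := ⟨v, C', hC', by
      rw [hedge1', ← dart_edge_val]
      exact List.mem_map_of_mem (List.mem_map_of_mem (f := Dart.edge) hd1')⟩
    refine ⟨t1, b1, t1', b1', hG1, hG1', hnt1, hnt1', (anc_iff hT r _ _).mpr hanc1,
      (anc_iff hT r _ _).mpr hanc1', hneq, hact1, hact1', ?_⟩
    rcases anc_total hT r hta hta' with h | h
    · -- t1 is above t1' : t1' lies in the truncated span of (t1, b1)
      left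
      constructor
      · apply (inSpan_iff hT t1 b1 t1').mpr
        apply (mem_span_iff hT r hanc1).mpr
        exact ⟨h, anc_trans hT r hta' (anc_trans hT r hancac hcb)⟩
      · intro heq2
        have l1 := anc_length_le hT r hta'
        have l2 := anc_length_lt hT r hancac hac
        have l3 := anc_length_le hT r hcb
        have l4 := anc_length_le hT r (hancac)
        rw [heq2] at l1
        omega
    · -- t1' is above t1 : t1 lies in the truncated span of (t1', b1')
      right
      constructor
      · apply (inSpan_iff hT t1' b1' t1).mpr
        apply (mem_span_iff hT r hanc1').mpr
        exact ⟨h, anc_trans hT r hta (anc_trans hT r hancac hcb')⟩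
      · intro heq2
        have l1 := anc_length_le hT r hta
        have l2 := anc_length_lt hT r hancac hac
        have l3 := anc_length_le hT r hcb'
        rw [heq2] at l1
        omega
  have hxb1 := ((mem_span_iff hT r hanc1).mp hvx1).2
  have hyb1 := ((mem_span_iff hT r hanc1).mp hvy1).2
  rcases anc_total hT r hxb1 hyb1 with h | h
  · exact main (x : V) (y : V) hvxy hvx1 hvx2 hvy1 hvy2 h
  · exact main (y : V) (x : V) hvxy.symm hvy1 hvy2 hvx1 hvx2 h
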